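/- For 1.8 ≤ λ < 2, write λ = 2cos²θ with 0 < θ < π/4, and let c_λ = A_λ B₂⁻¹ acting on ℝ ∪ {∞}. Then for every integer k with 0 ≤ k ≤ 1/(4θ), the point c_λ^k(5/4) lies in X₂ = {x ∈ ℝ : |x| > 1} ∪ {∞}; consequently c_λ^k K₂ ⊆ X₂ where K₂ = {x ∈ ℝ : |x| ≥ 5/4} ∪ {∞}. -/

import Mathlib

open OnePoint

/-- The matrix `A_λ = [[1,λ],[0,1]]` in `SL₂(ℝ)`. -/
def AmatR (lam : ℝ) : Matrix.SpecialLinearGroup (Fin 2) ℝ :=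
  ⟨!![1, lam; 0, 1], by simp [Matrix.det_fin_two_of]⟩

/-- The matrix `B_μ = [[1,0],[μ,1]]` in `SL₂(ℝ)`. -/
def BmatR (mu : ℝ) : Matrix.SpecialLinearGroup (Fin 2) ℝ :=
  ⟨!![1, 0; mu, 1], by simp [Matrix.det_fin_two_of]⟩

/-- The action of `SL₂(ℝ)` on the real projective line `ℝ ∪ {∞}` by Möbius
transformations. -/
noncomputable def moebiusR (g : Matrix.SpecialLinearGroup (Fin 2) ℝ) (z : OnePoint ℝ) :
    OnePoint ℝ :=
  OnePoint.rec
    (if g.1 1 0 = 0 then ∞ else ((g.1 0 0 / g.1 1 0 : ℝ) : OnePoint ℝ))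
    (fun w => if g.1 1 0 * w + g.1 1 1 = 0 then ∞
      else (((g.1 0 0 * w + g.1 0 1) / (g.1 1 0 * w + g.1 1 1) : ℝ) : OnePoint ℝ)) z

/- ### Auxiliary lemmas -/

lemma moebiusR_coe (g : Matrix.SpecialLinearGroup (Fin 2) ℝ) (w : ℝ) :
    moebiusR g (w : OnePoint ℝ) = (if g.1 1 0 * w + g.1 1 1 = 0 then ∞
      else (((g.1 0 0 * w + g.1 0 1) / (g.1 1 0 * w + g.1 1 1) : ℝ) : OnePoint ℝ)) := rfl

lemma moebiusR_infty (g : Matrix.SpecialLinearGroup (Fin 2) ℝ) :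
    moebiusR g ∞ = (if g.1 1 0 = 0 then ∞ else ((g.1 0 0 / g.1 1 0 : ℝ) : OnePoint ℝ)) := rfl

/-- The power formula for the elliptic matrix `c_λ`. -/
lemma matpow (θ : ℝ) (hs2 : Real.sin (2*θ) ≠ 0) (k : ℕ) :
    (!![1 - 2*(1 + Real.cos (2*θ)), 1 + Real.cos (2*θ); -2, 1] : Matrix (Fin 2) (Fin 2) ℝ) ^ k
    = ((-1:ℝ))^k • !![Real.cos (2*k*θ) + (1 + Real.cos (2*θ)) * (Real.sin (2*k*θ) / Real.sin (2*θ)),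
        -((1 + Real.cos (2*θ)) * (Real.sin (2*k*θ) / Real.sin (2*θ)));
        2 * (Real.sin (2*k*θ) / Real.sin (2*θ)),
        Real.cos (2*k*θ) - (1 + Real.cos (2*θ)) * (Real.sin (2*k*θ) / Real.sin (2*θ))] := by
  induction k with
  | zero => (norm_num; exact Matrix.one_fin_two)
  | succ n ih =>
    rw [pow_succ, ih]
    have h1 : 2*((n:ℝ)+1)*θ = 2*n*θ + 2*θ := by ring
    push_cast
    rw [h1, Real.cos_add, Real.sin_add, Matrix.smul_mul, Matrix.mul_fin_two]
    rw [pow_succ]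
    ext i j
    fin_cases i <;> fin_cases j <;>
      simp only [Matrix.smul_apply, Matrix.cons_val', Matrix.cons_val_zero, Matrix.cons_val_one,
        Matrix.head_cons, Matrix.head_fin_const, Matrix.empty_val', Matrix.cons_val_fin_one,
        smul_eq_mul, Fin.zero_eta, Fin.mk_one, Matrix.of_apply] <;>
      field_simp
    · linear_combination (-Real.sin (2*(n:ℝ)*θ)) * Real.sin_sq_add_cos_sq (2*θ)
    · ring
    · ring
    · linear_combination (-Real.sin (2*(n:ℝ)*θ)) * Real.sin_sq_add_cos_sq (2*θ)

lemma abs_div_gt_one (a b : ℝ) (hb : b ≠ 0) (h : b^2 < a^2) : 1 < |a / b| := by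
  rw [abs_div, lt_div_iff₀ (abs_pos.mpr hb), one_mul]
  nlinarith [sq_abs a, sq_abs b, abs_nonneg a, abs_nonneg b, abs_pos.mpr hb]

/-- The key inequality: the transformed point stays outside `[-1,1]`. -/
lemma key_ineq (cθ sθ ct st w : ℝ) (hpy : sθ^2 + cθ^2 = 1) (hc : 0 < cθ) (hs : 0 < sθ)
    (hct : 0 < ct) (hst : 0 ≤ st) (hK : 5*(sθ*st) < cθ*ct) (hw : 5/4 ≤ |w|) :
    (2*st*w + 2*sθ*cθ*ct - 2*cθ^2*st)^2 < ((2*sθ*cθ*ct + 2*cθ^2*st)*w - 2*cθ^2*st)^2 := by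
  have hid : ((2*sθ*cθ*ct + 2*cθ^2*st)*w - 2*cθ^2*st)^2 - (2*st*w + 2*sθ*cθ*ct - 2*cθ^2*st)^2
      = 4 * (sθ * (((cθ*ct - sθ*st)*w - cθ*ct) *
          ((sθ*cθ*ct + cθ^2*st + st)*w + sθ*cθ*ct - 2*cθ^2*st))) := by
    linear_combination (4*st^2*w^2 + 4*cθ*sθ*ct*st*w + 4*cθ*sθ*ct*st*w^2 - 8*cθ^2*st^2*w
      + 4*cθ^2*st^2*w^2) * hpy
  have hA : 0 < cθ*ct - sθ*st := by nlinarith [mul_nonneg hs.le hst]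
  have hcc : 0 < sθ*cθ*ct := mul_pos (mul_pos hs hc) hct
  have hc2st : 0 ≤ cθ^2*st := by positivity
  have hB : 0 ≤ sθ*cθ*ct + cθ^2*st + st := by linarith
  have hc2le : cθ^2 ≤ 1 := by nlinarith
  rcases le_abs.mp hw with h | h
  · have hw0 : 0 ≤ w - 5/4 := by linarith
    have hf1 : 0 < (cθ*ct - sθ*st)*w - cθ*ct := by
      nlinarith [mul_nonneg hA.le hw0]
    have hf2 : 0 < (sθ*cθ*ct + cθ^2*st + st)*w + sθ*cθ*ct - 2*cθ^2*st := by
      nlinarith [mul_nonneg hB hw0]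
    linarith [hid, mul_pos hs (mul_pos hf1 hf2)]
  · have hw0 : 0 ≤ -w - 5/4 := by linarith
    have hf1 : (cθ*ct - sθ*st)*w - cθ*ct < 0 := by
      nlinarith [mul_nonneg hA.le hw0]
    have hf2 : (sθ*cθ*ct + cθ^2*st + st)*w + sθ*cθ*ct - 2*cθ^2*st < 0 := by
      nlinarith [mul_nonneg hB hw0]
    linarith [hid, mul_pos hs (mul_pos_of_neg_of_neg hf1 hf2)]

/-- The key inequality for the point at infinity. -/
lemma key_ineq_infty (cθ sθ ct st : ℝ) (hpy : sθ^2 + cθ^2 = 1) (hc : 0 < cθ) (hs : 0 < sθ)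
    (hct : 0 < ct) (hst : 0 ≤ st) (hK : 5*(sθ*st) < cθ*ct) :
    (2*st)^2 < (2*sθ*cθ*ct + 2*cθ^2*st)^2 := by
  have hid : (2*sθ*cθ*ct + 2*cθ^2*st)^2 - (2*st)^2
      = 4 * ((sθ*(cθ*ct - sθ*st)) * (sθ*cθ*ct + cθ^2*st + st)) := by
    linear_combination (4*st^2 + 4*cθ*sθ*ct*st + 4*cθ^2*st^2) * hpy
  have hA : 0 < cθ*ct - sθ*st := by nlinarith [mul_nonneg hs.le hst]
  have hcc : 0 < sθ*cθ*ct := mul_pos (mul_pos hs hc) hct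
  have hc2st : 0 ≤ cθ^2*st := by positivity
  have hB : 0 < sθ*cθ*ct + cθ^2*st + st := by linarith
  linarith [hid, mul_pos (mul_pos hs hA) hB]

set_option maxHeartbeats 1000000 in
/-- for `1.8 ≤ λ < 2` with `λ = 2cos²θ`, `0 < θ < π/4`, and
`c_λ = A_λ B₂⁻¹`, for every integer `0 ≤ k ≤ 1/(4θ)` the point `c_λ^k(5/4)` lies in
`X₂ = {|x| > 1} ∪ {∞}`; consequently `c_λ^k K₂ ⊆ X₂` where `K₂ = {|x| ≥ 5/4} ∪ {∞}`. -/
theorem stmt_16 (lam θ : ℝ) (h1 : 1.8 ≤ lam) (h2 : lam < 2)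
    (hθ : 0 < θ) (hθ2 : θ < Real.pi / 4) (hlam : lam = 2 * Real.cos θ ^ 2)
    (k : ℕ) (hk : (k : ℝ) ≤ 1 / (4 * θ)) :
    moebiusR ((AmatR lam * (BmatR 2)⁻¹) ^ k) (((5 / 4 : ℝ) : OnePoint ℝ)) ∈
      (((↑) : ℝ → OnePoint ℝ) '' {x : ℝ | 1 < |x|} ∪ {∞}) ∧
    ∀ z ∈ (((↑) : ℝ → OnePoint ℝ) '' {x : ℝ | 5 / 4 ≤ |x|} ∪ {∞}),
      moebiusR ((AmatR lam * (BmatR 2)⁻¹) ^ k) z ∈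
        (((↑) : ℝ → OnePoint ℝ) '' {x : ℝ | 1 < |x|} ∪ {∞}) := by
  have hpi : (3.14 : ℝ) < Real.pi := by
    have := Real.pi_gt_d6; linarith
  -- trigonometric facts about θ
  have hcθ : 0 < Real.cos θ := Real.cos_pos_of_mem_Ioo ⟨by linarith, by linarith⟩
  have hsθ : 0 < Real.sin θ := Real.sin_pos_of_pos_of_lt_pi hθ (by linarith)
  have hpy : Real.sin θ ^ 2 + Real.cos θ ^ 2 = 1 := Real.sin_sq_add_cos_sq θ
  have hcos2 : (0.9 : ℝ) ≤ Real.cos θ ^ 2 := by nlinarith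
  have h3s : 3 * Real.sin θ ≤ Real.cos θ := by nlinarith
  have hlam2 : lam = 1 + Real.cos (2*θ) := by rw [Real.cos_two_mul]; linarith
  have hs2eq : Real.sin (2*θ) = 2 * Real.sin θ * Real.cos θ := Real.sin_two_mul θ
  have hs2pos : 0 < Real.sin (2*θ) := by rw [hs2eq]; positivity
  -- facts about t = 2kθ
  set t : ℝ := 2*(k:ℝ)*θ with htdef
  have ht0 : 0 ≤ t := by positivity
  have ht : t ≤ 1/2 := by
    have h4θ : (0:ℝ) < 4*θ := by linarith
    have := (le_div_iff₀ h4θ).mp hk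
    nlinarith
  have hct : 7/8 ≤ Real.cos t := by
    have := Real.one_sub_sq_div_two_le_cos (x := t)
    nlinarith
  have hctpos : 0 < Real.cos t := by linarith
  have hst0 : 0 ≤ Real.sin t := Real.sin_nonneg_of_nonneg_of_le_pi ht0 (by linarith)
  have hst2 : Real.sin t ≤ 1/2 := by
    have := Real.sin_le ht0
    linarith
  have hK : 5*(Real.sin θ * Real.sin t) < Real.cos θ * Real.cos t := by
    have h1' : Real.sin θ * Real.sin t ≤ (Real.cos θ / 3) * (1/2) :=
      mul_le_mul (by linarith) hst2 hst0 (by positivity)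
    nlinarith
  -- the matrix of c_λ and of c_λ^k
  have hC : ((AmatR lam * (BmatR 2)⁻¹ : Matrix.SpecialLinearGroup (Fin 2) ℝ) :
      Matrix (Fin 2) (Fin 2) ℝ) = !![1 - 2*lam, lam; -2, 1] := by
    have hB : (((BmatR 2)⁻¹ : Matrix.SpecialLinearGroup (Fin 2) ℝ) :
        Matrix (Fin 2) (Fin 2) ℝ) = !![1, 0; -2, 1] := by
      rw [Matrix.SpecialLinearGroup.coe_inv]
      simp [BmatR, Matrix.adjugate_fin_two]
    rw [Matrix.SpecialLinearGroup.coe_mul, hB]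
    show (!![1, lam; 0, 1] : Matrix (Fin 2) (Fin 2) ℝ) * !![1, 0; -2, 1] = _
    rw [Matrix.mul_fin_two]
    ext i j
    fin_cases i <;> fin_cases j <;> simp <;> ring_nf
  have hpow : (((AmatR lam * (BmatR 2)⁻¹) ^ k : Matrix.SpecialLinearGroup (Fin 2) ℝ) :
      Matrix (Fin 2) (Fin 2) ℝ)
      = ((-1:ℝ))^k • !![Real.cos t + (1 + Real.cos (2*θ)) * (Real.sin t / Real.sin (2*θ)),
        -((1 + Real.cos (2*θ)) * (Real.sin t / Real.sin (2*θ)));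
        2 * (Real.sin t / Real.sin (2*θ)),
        Real.cos t - (1 + Real.cos (2*θ)) * (Real.sin t / Real.sin (2*θ))] := by
    rw [Matrix.SpecialLinearGroup.coe_pow, hC, hlam2]
    exact matpow θ (ne_of_gt hs2pos) k
  -- abbreviations
  set cθ := Real.cos θ
  set sθ := Real.sin θ
  set ct := Real.cos t
  set st := Real.sin t
  set e : ℝ := (-1:ℝ)^k with hedef
  have he2 : e^2 = 1 := by
    rw [hedef, ← pow_mul, mul_comm, pow_mul]; norm_num
  have hene : e ≠ 0 := by
    intro h
    rw [h] at he2
    norm_num at he2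
  -- entries of the k-th power
  have g00 : (((AmatR lam * (BmatR 2)⁻¹) ^ k).1) 0 0
      = e * (ct + (1 + Real.cos (2*θ)) * (st / Real.sin (2*θ))) := by
    rw [hpow]; simp [Matrix.smul_apply]
  have g01 : (((AmatR lam * (BmatR 2)⁻¹) ^ k).1) 0 1
      = e * (-((1 + Real.cos (2*θ)) * (st / Real.sin (2*θ)))) := by
    rw [hpow]; simp [Matrix.smul_apply]
  have g10 : (((AmatR lam * (BmatR 2)⁻¹) ^ k).1) 1 0
      = e * (2 * (st / Real.sin (2*θ))) := by
    rw [hpow]; simp [Matrix.smul_apply]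
  have g11 : (((AmatR lam * (BmatR 2)⁻¹) ^ k).1) 1 1
      = e * (ct - (1 + Real.cos (2*θ)) * (st / Real.sin (2*θ))) := by
    rw [hpow]; simp [Matrix.smul_apply]
  have hlam3 : 1 + Real.cos (2*θ) = 2*cθ^2 := by
    rw [Real.cos_two_mul]; ring
  have hsc : sθ * cθ ≠ 0 := by positivity
  -- the main claim, for an arbitrary point of K₂
  have main : ∀ z ∈ (((↑) : ℝ → OnePoint ℝ) '' {x : ℝ | 5 / 4 ≤ |x|} ∪ {∞}),
      moebiusR ((AmatR lam * (BmatR 2)⁻¹) ^ k) z ∈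
        (((↑) : ℝ → OnePoint ℝ) '' {x : ℝ | 1 < |x|} ∪ {∞}) := by
    rintro z (⟨w, hw, rfl⟩ | rfl)
    · -- z = ↑w with 5/4 ≤ |w|
      rw [moebiusR_coe]
      split_ifs with hden
      · exact Or.inr rfl
      · left
        refine ⟨_, ?_, rfl⟩
        rw [Set.mem_setOf_eq]
        apply abs_div_gt_one _ _ hden
        rw [g00, g01, g10, g11, hlam3, hs2eq]
        have ha : (e * (ct + 2*cθ^2 * (st / (2*sθ*cθ))) * w + e * -(2*cθ^2 * (st / (2*sθ*cθ))))^2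
            = (((2*sθ*cθ*ct + 2*cθ^2*st)*w - 2*cθ^2*st)^2) / (2*sθ*cθ)^2 := by
          field_simp
          rcases (mul_self_eq_one_iff (a := e)).mp (by rw [← sq]; exact he2) with he | he <;> rw [he] <;> ring
        have hb : (e * (2 * (st / (2*sθ*cθ))) * w + e * (ct - 2*cθ^2 * (st / (2*sθ*cθ))))^2
            = ((2*st*w + 2*sθ*cθ*ct - 2*cθ^2*st)^2) / (2*sθ*cθ)^2 := by
          field_simp
          rcases (mul_self_eq_one_iff (a := e)).mp (by rw [← sq]; exact he2) with he | he <;> rw [he] <;> ring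
        rw [ha, hb, div_lt_div_iff_of_pos_right (by positivity)]
        exact key_ineq cθ sθ ct st w hpy hcθ hsθ hctpos hst0 hK hw
    · -- z = ∞
      rw [moebiusR_infty]
      split_ifs with hden
      · exact Or.inr rfl
      · left
        refine ⟨_, ?_, rfl⟩
        rw [Set.mem_setOf_eq]
        apply abs_div_gt_one _ _ hden
        rw [g00, g10, hlam3, hs2eq]
        have ha : (e * (ct + 2*cθ^2 * (st / (2*sθ*cθ))))^2
            = ((2*sθ*cθ*ct + 2*cθ^2*st)^2) / (2*sθ*cθ)^2 := by
          field_simp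
          rcases (mul_self_eq_one_iff (a := e)).mp (by rw [← sq]; exact he2) with he | he <;> rw [he] <;> ring
        have hb : (e * (2 * (st / (2*sθ*cθ))))^2 = ((2*st)^2) / (2*sθ*cθ)^2 := by
          field_simp
          rcases (mul_self_eq_one_iff (a := e)).mp (by rw [← sq]; exact he2) with he | he <;> rw [he] <;> ring
        rw [ha, hb, div_lt_div_iff_of_pos_right (by positivity)]
        exact key_ineq_infty cθ sθ ct st hpy hcθ hsθ hctpos hst0 hK
  refine ⟨?_, main⟩
  exact main _ (Or.inl ⟨5/4, by norm_num [abs_of_nonneg], rfl⟩)
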